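/- arXiv:1409.3274 — 3 statements merged into one kernel-verified Lean document; each statement's English description precedes it below -/
import Mathlib

section
/- The number of binary characters on a set X of size n ≥ 2 that are compatible with a given binary character χ dividing X into blocks of sizes r and n−r, with 2 ≤ r ≤ n−2, equals 2^(r+1) + 2^(n−r+1) − 4. (Two binary characters on X are compatible if, for a fixed reference element x₀, the two sets of elements assigned a state different from that of x₀ are disjoint or nested.) -/
open Finset
open scoped Classical

/-- The set of taxa whose state differs from that of the reference taxon `x0`. -/
noncomputable def Aset {n : ℕ} (x0 : Fin n) (χ : Fin n → Bool) : Finset (Fin n) :=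
  Finset.univ.filter fun x => χ x ≠ χ x0

/-- Two binary characters are compatible if their `Aset`s are disjoint or nested. -/
def Compat {n : ℕ} (x0 : Fin n) (χ₁ χ₂ : Fin n → Bool) : Prop :=
  Disjoint (Aset x0 χ₁) (Aset x0 χ₂) ∨ Aset x0 χ₁ ⊆ Aset x0 χ₂ ∨ Aset x0 χ₂ ⊆ Aset x0 χ₁

lemma mem_Aset {n : ℕ} {x0 : Fin n} {χ : Fin n → Bool} {x : Fin n} :
    x ∈ Aset x0 χ ↔ χ x ≠ χ x0 := by simp [Aset]

lemma x0_not_mem_Aset {n : ℕ} (x0 : Fin n) (χ : Fin n → Bool) : x0 ∉ Aset x0 χ := by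
  simp [Aset]

/-- Step 1: characters biject with (value at x0, Aset). -/
lemma step1 (n : ℕ) (x0 : Fin n) (A : Finset (Fin n)) :
    (Finset.univ.filter fun ψ : Fin n → Bool =>
        Disjoint A (Aset x0 ψ) ∨ A ⊆ Aset x0 ψ ∨ Aset x0 ψ ⊆ A).card
      = 2 * ((Finset.univ.erase x0).powerset.filter
          fun B => Disjoint A B ∨ A ⊆ B ∨ B ⊆ A).card := by
  rw [show (2:ℕ) = (Finset.univ : Finset Bool).card by simp, ← card_product]
  refine card_nbij' (fun ψ => (ψ x0, Aset x0 ψ))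
    (fun p => fun x => if x ∈ p.2 then !p.1 else p.1) ?_ ?_ ?_ ?_
  · intro ψ hψ
    simp only [mem_coe, mem_filter, mem_univ, true_and] at hψ
    simp only [mem_coe, mem_product, mem_univ, true_and, mem_filter, mem_powerset]
    refine ⟨fun x hx => mem_erase.2 ⟨?_, mem_univ x⟩, hψ⟩
    exact fun h => x0_not_mem_Aset x0 ψ (h ▸ hx)
  · intro p hp
    simp only [mem_coe, mem_product, mem_univ, true_and, mem_filter, mem_powerset] at hp
    have hx0 : x0 ∉ p.2 := fun h => (mem_erase.1 (hp.1 h)).1 rfl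
    have hA : Aset x0 (fun x => if x ∈ p.2 then !p.1 else p.1) = p.2 := by
      ext x
      simp only [mem_Aset, if_neg hx0]
      by_cases hx : x ∈ p.2 <;> simp [hx]
    simp only [mem_coe, mem_filter, mem_univ, true_and, hA]
    exact hp.2
  · intro ψ hψ
    funext x
    by_cases hx : x ∈ Aset x0 ψ
    · have : ψ x ≠ ψ x0 := mem_Aset.1 hx
      simp only [if_pos hx]
      cases h1 : ψ x <;> cases h2 : ψ x0 <;> simp_all
    · have : ψ x = ψ x0 := by
        by_contra h
        exact hx (mem_Aset.2 h)
      simp [if_neg hx, this]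
  · intro p hp
    simp only [mem_coe, mem_product, mem_univ, true_and, mem_filter, mem_powerset] at hp
    have hx0 : x0 ∉ p.2 := fun h => (mem_erase.1 (hp.1 h)).1 rfl
    have hA : Aset x0 (fun x => if x ∈ p.2 then !p.1 else p.1) = p.2 := by
      ext x
      simp only [mem_Aset, if_neg hx0]
      by_cases hx : x ∈ p.2 <;> simp [hx]
    simp [hA, if_neg hx0]

/-- Step 2: count the good subsets. -/
lemma step2 (n : ℕ) (x0 : Fin n) (A : Finset (Fin n)) (hx0 : x0 ∉ A) (hA : 2 ≤ A.card) :
    ((Finset.univ.erase x0).powerset.filter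
        fun B => Disjoint A B ∨ A ⊆ B ∨ B ⊆ A).card + 2
      = 2 ^ A.card + 2 * 2 ^ (n - 1 - A.card) := by
  set S : Finset (Fin n) := Finset.univ.erase x0 with hS
  have hAS : A ⊆ S := fun x hx => mem_erase.2 ⟨fun h => hx0 (h ▸ hx), mem_univ x⟩
  have hScard : S.card = n - 1 := by
    rw [hS, card_erase_of_mem (mem_univ x0), card_univ, Fintype.card_fin]
  have hSA : (S \ A).card = n - 1 - A.card := by
    rw [card_sdiff_of_subset hAS, hScard]
  set X : Finset (Finset (Fin n)) := (S \ A).powerset with hX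
  set Y : Finset (Finset (Fin n)) := A.powerset with hY
  set Z : Finset (Finset (Fin n)) := (S \ A).powerset.image (· ∪ A) with hZ
  have hPeq : (S.powerset.filter fun B => Disjoint A B ∨ A ⊆ B ∨ B ⊆ A)
      = X ∪ (Y ∪ Z) := by
    ext B
    simp only [mem_filter, mem_powerset, mem_union, hX, hY, hZ, mem_image]
    constructor
    · rintro ⟨hBS, hDis | hAB | hBA⟩
      · exact Or.inl (subset_sdiff.2 ⟨hBS, hDis.symm⟩)
      · refine Or.inr (Or.inr ⟨B \ A, sdiff_subset_sdiff hBS Subset.rfl, ?_⟩)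
        exact sdiff_union_of_subset hAB
      · exact Or.inr (Or.inl hBA)
    · rintro (hBSA | hBA | ⟨C, hC, rfl⟩)
      · obtain ⟨h1, h2⟩ := subset_sdiff.1 hBSA
        exact ⟨h1, Or.inl h2.symm⟩
      · exact ⟨hBA.trans hAS, Or.inr (Or.inr hBA)⟩
      · refine ⟨union_subset (hC.trans sdiff_subset) hAS,
          Or.inr (Or.inl subset_union_right)⟩
  have hXcard : X.card = 2 ^ (n - 1 - A.card) := by rw [hX, card_powerset, hSA]
  have hYcard : Y.card = 2 ^ A.card := by rw [hY, card_powerset]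
  have hZcard : Z.card = 2 ^ (n - 1 - A.card) := by
    rw [hZ, card_image_of_injOn, card_powerset, hSA]
    intro C1 h1 C2 h2 h
    simp only [coe_powerset, Set.mem_preimage, Set.mem_powerset_iff, coe_sdiff] at h1 h2
    have d1 : Disjoint C1 A := by
      rw [disjoint_left]
      intro x hx
      have := h1 hx
      simp only [Set.mem_diff, mem_coe] at this
      exact this.2
    have d2 : Disjoint C2 A := by
      rw [disjoint_left]
      intro x hx
      have := h2 hx
      simp only [Set.mem_diff, mem_coe] at this
      exact this.2
    have : (C1 ∪ A) \ A = (C2 ∪ A) \ A := by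
      have h' : C1 ∪ A = C2 ∪ A := h
      rw [h']
    rwa [union_sdiff_cancel_right d1, union_sdiff_cancel_right d2] at this
  have hYZ : Y ∩ Z = {A} := by
    ext B
    simp only [mem_inter, hY, hZ, mem_powerset, mem_image, mem_singleton]
    constructor
    · rintro ⟨hBA, C, hC, rfl⟩
      exact Subset.antisymm hBA subset_union_right
    · rintro rfl
      exact ⟨Subset.rfl, ∅, by simp⟩
  have hXYZ : X ∩ (Y ∪ Z) = {∅} := by
    ext B
    simp only [mem_inter, hX, hY, hZ, mem_union, mem_powerset, mem_image, mem_singleton]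
    constructor
    · rintro ⟨hBSA, hBA | ⟨C, hC, rfl⟩⟩
      · have : B ⊆ (S \ A) ∩ A := subset_inter hBSA hBA
        rw [sdiff_inter_self] at this
        exact subset_empty.1 this
      · exfalso
        have hAB : A ⊆ C ∪ A := subset_union_right
        have : A ⊆ (S \ A) ∩ A := subset_inter (hAB.trans hBSA) Subset.rfl
        rw [sdiff_inter_self] at this
        have : A.card = 0 := by simpa using card_le_card this
        omega
    · rintro rfl
      exact ⟨empty_subset _, Or.inl (empty_subset _)⟩
  have e1 : (Y ∪ Z).card + 1 = Y.card + Z.card := by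
    have := card_union_add_card_inter Y Z
    rw [hYZ, card_singleton] at this
    omega
  have e2 : (X ∪ (Y ∪ Z)).card + 1 = X.card + (Y ∪ Z).card := by
    have := card_union_add_card_inter X (Y ∪ Z)
    rw [hXYZ, card_singleton] at this
    omega
  rw [hPeq]
  omega

/-- The number of binary characters on an `n`-set compatible with a character splitting the
set into blocks of sizes `r` and `n - r` (with `2 ≤ r ≤ n - 2`) is
`2^(r+1) + 2^(n-r+1) - 4`. -/
theorem stmt0 (n r : ℕ) (hn : 2 ≤ n) (hr : 2 ≤ r) (hr' : r ≤ n - 2)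
    (x0 : Fin n) (χ : Fin n → Bool)
    (hχ : (Finset.univ.filter fun x => χ x = true).card = r) :
    (Finset.univ.filter fun ψ : Fin n → Bool => Compat x0 χ ψ).card
      = 2 ^ (r + 1) + 2 ^ (n - r + 1) - 4 := by
  have hrn : r + 2 ≤ n := by omega
  set A : Finset (Fin n) := Aset x0 χ with hA
  have hx0 : x0 ∉ A := x0_not_mem_Aset x0 χ
  have hcardA : A.card = r ∨ A.card = n - r := by
    have hsum := Finset.card_filter_add_card_filter_not
      (s := (Finset.univ : Finset (Fin n))) (p := fun x => χ x = true)
    rw [hχ, card_univ, Fintype.card_fin] at hsum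
    cases h0 : χ x0 with
    | false =>
      left
      rw [hA, ← hχ]
      congr 1
      ext x
      simp [Aset, h0]
    | true =>
      right
      have : A = Finset.univ.filter fun x => ¬ χ x = true := by
        ext x; simp [hA, Aset, h0]
      rw [this]
      omega
  have ha2 : 2 ≤ A.card := by omega
  have hfil : (Finset.univ.filter fun ψ : Fin n → Bool => Compat x0 χ ψ)
      = Finset.univ.filter fun ψ : Fin n → Bool =>
          Disjoint A (Aset x0 ψ) ∨ A ⊆ Aset x0 ψ ∨ Aset x0 ψ ⊆ A := by
    ext ψ; rw [mem_filter, mem_filter]; simp [Compat, hA]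
  rw [hfil, step1 n x0 A]
  have hst2 := step2 n x0 A hx0 ha2
  rcases hcardA with h | h
  · rw [h] at hst2
    have hp1 : 2 * 2 ^ (n - 1 - r) = 2 ^ (n - r) := by
      rw [← pow_succ']
      congr 1
      omega
    have hp2 : 2 ^ (r + 1) = 2 * 2 ^ r := by rw [pow_succ']
    have hp3 : 2 ^ (n - r + 1) = 2 * 2 ^ (n - r) := by rw [pow_succ']
    have h4 : 4 ≤ 2 ^ r := by
      calc (4:ℕ) = 2 ^ 2 := by norm_num
      _ ≤ 2 ^ r := Nat.pow_le_pow_right (by norm_num) hr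
    omega
  · rw [h] at hst2
    have hnr2 : 2 ≤ n - r := by omega
    have hp1 : 2 * 2 ^ (n - 1 - (n - r)) = 2 ^ r := by
      rw [← pow_succ']
      congr 1
      omega
    have hp2 : 2 ^ (r + 1) = 2 * 2 ^ r := by rw [pow_succ']
    have hp3 : 2 ^ (n - r + 1) = 2 * 2 ^ (n - r) := by rw [pow_succ']
    have h4 : 4 ≤ 2 ^ (n - r) := by
      calc (4:ℕ) = 2 ^ 2 := by norm_num
      _ ≤ 2 ^ (n - r) := Nat.pow_le_pow_right (by norm_num) hnr2
    omega
end

section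
/- The probability p_n that two independent uniformly random binary characters on an n-element set (n ≥ 2) are compatible equals 4·(3/4)^n − (1/2)^(n−1)·(3 − (1/2)^(n−1)). -/
open Finset
open scoped Classical

/-- Allowed values (relative to reference value `c`) for the "disjoint" condition. -/
def tD (c : Bool × Bool) : Finset (Bool × Bool) :=
  Finset.univ.filter fun v => v.1 = c.1 ∨ v.2 = c.2
/-- Allowed values for the "A₁ ⊆ A₂" condition. -/
def tB (c : Bool × Bool) : Finset (Bool × Bool) :=
  Finset.univ.filter fun v => v.1 = c.1 ∨ v.2 ≠ c.2
/-- Allowed values for the "A₂ ⊆ A₁" condition. -/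
def tC (c : Bool × Bool) : Finset (Bool × Bool) :=
  Finset.univ.filter fun v => v.2 = c.2 ∨ v.1 ≠ c.1

lemma count_pi {n : ℕ} (x0 : Fin n) (c : Bool × Bool) (s : Finset (Bool × Bool))
    (hc : c ∈ s) :
    (Finset.univ.filter fun h : Fin n → Bool × Bool => h x0 = c ∧ ∀ x, h x ∈ s).card
      = s.card ^ (n - 1) := by
  have hfe : (Finset.univ.filter fun h : Fin n → Bool × Bool => h x0 = c ∧ ∀ x, h x ∈ s)
      = Fintype.piFinset (fun x => if x = x0 then {c} else s) := by
    ext h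
    simp only [Finset.mem_filter, Finset.mem_univ, true_and, Fintype.mem_piFinset]
    constructor
    · rintro ⟨h0, hall⟩ x
      by_cases hx : x = x0 <;> simp [hx, h0, hall x]
    · intro hall
      have h0 : h x0 = c := by simpa using hall x0
      refine ⟨h0, fun x => ?_⟩
      by_cases hx : x = x0
      · rw [hx, h0]; exact hc
      · simpa [hx] using hall x
  rw [hfe, Fintype.card_piFinset]
  have hcard : ∀ x : Fin n, (if x = x0 then ({c} : Finset (Bool × Bool)) else s).card
      = if x = x0 then 1 else s.card := by
    intro x; by_cases hx : x = x0 <;> simp [hx]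
  rw [Finset.prod_congr rfl fun x _ => hcard x]
  rw [← Finset.mul_prod_erase _ _ (Finset.mem_univ x0)]
  have h2 : ∀ x ∈ Finset.univ.erase x0,
      (if x = x0 then 1 else s.card) = s.card := by
    intro x hx
    simp [Finset.ne_of_mem_erase hx]
  rw [Finset.prod_congr rfl h2, Finset.prod_const, if_pos rfl, one_mul,
    Finset.card_erase_of_mem (Finset.mem_univ _), Finset.card_univ, Fintype.card_fin]

lemma count_cond {n : ℕ} (x0 : Fin n) (t : Bool × Bool → Finset (Bool × Bool))
    (hmem : ∀ c, c ∈ t c) (k : ℕ) (hk : ∀ c, (t c).card = k) :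
    (Finset.univ.filter fun h : Fin n → Bool × Bool => ∀ x, h x ∈ t (h x0)).card
      = 4 * k ^ (n - 1) := by
  rw [Finset.card_eq_sum_card_fiberwise
    (f := fun h : Fin n → Bool × Bool => h x0) (t := Finset.univ) (fun _ _ => Finset.mem_univ _)]
  have key : ∀ c : Bool × Bool,
      ((Finset.univ.filter fun h : Fin n → Bool × Bool => ∀ x, h x ∈ t (h x0)).filter
        fun h => h x0 = c).card = k ^ (n - 1) := by
    intro c
    rw [Finset.filter_filter]
    have he : ((Finset.univ : Finset (Fin n → Bool × Bool)).filter
        fun h => (∀ x, h x ∈ t (h x0)) ∧ h x0 = c)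
        = (Finset.univ.filter fun h => h x0 = c ∧ ∀ x, h x ∈ t c) := by
      apply Finset.filter_congr
      intro h _
      constructor
      · rintro ⟨hall, h0⟩; exact ⟨h0, fun x => h0 ▸ hall x⟩
      · rintro ⟨h0, hall⟩; exact ⟨fun x => by rw [h0]; exact hall x, h0⟩
    rw [he, count_pi x0 c (t c) (hmem c), hk]
  rw [Finset.sum_congr rfl fun c _ => key c, Finset.sum_const, Finset.card_univ]
  simp [Fintype.card_prod]

lemma compat_iff {n : ℕ} (x0 : Fin n) (χ₁ χ₂ : Fin n → Bool) :
    Compat x0 χ₁ χ₂ ↔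
      ((∀ x, (χ₁ x, χ₂ x) ∈ tD (χ₁ x0, χ₂ x0)) ∨
        (∀ x, (χ₁ x, χ₂ x) ∈ tB (χ₁ x0, χ₂ x0)) ∨
        (∀ x, (χ₁ x, χ₂ x) ∈ tC (χ₁ x0, χ₂ x0))) := by
  have hD : Disjoint (Aset x0 χ₁) (Aset x0 χ₂) ↔
      ∀ x, (χ₁ x, χ₂ x) ∈ tD (χ₁ x0, χ₂ x0) := by
    rw [Finset.disjoint_left]
    simp only [Aset, tD, Finset.mem_filter, Finset.mem_univ, true_and]
    exact forall_congr' fun x => by tauto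
  have hB : Aset x0 χ₁ ⊆ Aset x0 χ₂ ↔
      ∀ x, (χ₁ x, χ₂ x) ∈ tB (χ₁ x0, χ₂ x0) := by
    rw [Finset.subset_iff]
    simp only [Aset, tB, Finset.mem_filter, Finset.mem_univ, true_and]
    exact forall_congr' fun x => by tauto
  have hC : Aset x0 χ₂ ⊆ Aset x0 χ₁ ↔
      ∀ x, (χ₁ x, χ₂ x) ∈ tC (χ₁ x0, χ₂ x0) := by
    rw [Finset.subset_iff]
    simp only [Aset, tC, Finset.mem_filter, Finset.mem_univ, true_and]
    exact forall_congr' fun x => by tauto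
  rw [Compat, hD, hB, hC]

/-- The probability that two independent uniformly random binary characters on an
n-element set (n ≥ 2) are compatible equals 4(3/4)^n - (1/2)^(n-1) (3 - (1/2)^(n-1)). -/
theorem stmt2 (n : ℕ) (hn : 2 ≤ n) (x0 : Fin n) :
    ((Finset.univ.filter fun p : (Fin n → Bool) × (Fin n → Bool) =>
        Compat x0 p.1 p.2).card : ℝ) / 4 ^ n
      = 4 * (3 / 4 : ℝ) ^ n
          - (1 / 2 : ℝ) ^ (n - 1) * (3 - (1 / 2 : ℝ) ^ (n - 1)) := by
  obtain ⟨m, rfl⟩ : ∃ m, n = m + 1 := ⟨n - 1, by omega⟩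
  set A := (Finset.univ : Finset (Fin (m+1) → Bool × Bool)).filter
    (fun h => ∀ x, h x ∈ tD (h x0)) with hA'
  set B := (Finset.univ : Finset (Fin (m+1) → Bool × Bool)).filter
    (fun h => ∀ x, h x ∈ tB (h x0)) with hB'
  set C := (Finset.univ : Finset (Fin (m+1) → Bool × Bool)).filter
    (fun h => ∀ x, h x ∈ tC (h x0)) with hC'
  have hcA : A.card = 4 * 3 ^ m := count_cond x0 tD (by decide) 3 (by decide)
  have hcB : B.card = 4 * 3 ^ m := count_cond x0 tB (by decide) 3 (by decide)
  have hcC : C.card = 4 * 3 ^ m := count_cond x0 tC (by decide) 3 (by decide)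
  have inter_eq : ∀ (t₁ t₂ : Bool × Bool → Finset (Bool × Bool)),
      ((Finset.univ : Finset (Fin (m+1) → Bool × Bool)).filter (fun h => ∀ x, h x ∈ t₁ (h x0)))
        ∩ (Finset.univ.filter (fun h => ∀ x, h x ∈ t₂ (h x0)))
      = Finset.univ.filter (fun h => ∀ x, h x ∈ t₁ (h x0) ∩ t₂ (h x0)) := by
    intro t₁ t₂
    rw [← Finset.filter_and]
    apply Finset.filter_congr
    intro h _
    simp only [Finset.mem_inter, ← forall_and]
  have hcAB : (A ∩ B).card = 4 * 2 ^ m := by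
    rw [hA', hB', inter_eq]
    exact count_cond x0 (fun c => tD c ∩ tB c) (by decide) 2 (by decide)
  have hcAC : (A ∩ C).card = 4 * 2 ^ m := by
    rw [hA', hC', inter_eq]
    exact count_cond x0 (fun c => tD c ∩ tC c) (by decide) 2 (by decide)
  have hcBC : (B ∩ C).card = 4 * 2 ^ m := by
    rw [hB', hC', inter_eq]
    exact count_cond x0 (fun c => tB c ∩ tC c) (by decide) 2 (by decide)
  have hcABC : (A ∩ B ∩ C).card = 4 := by
    have h3 : A ∩ B ∩ C = Finset.univ.filter
        (fun h : Fin (m+1) → Bool × Bool => ∀ x, h x ∈ tD (h x0) ∩ tB (h x0) ∩ tC (h x0)) := by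
      ext h
      simp only [hA', hB', hC', Finset.mem_inter, Finset.mem_filter, Finset.mem_univ, true_and,
        ← forall_and]
    rw [h3]
    have := count_cond x0 (fun c => tD c ∩ tB c ∩ tC c) (by decide) 1 (by decide)
    simpa using this
  have hbij : (Finset.univ.filter fun p : (Fin (m+1) → Bool) × (Fin (m+1) → Bool) =>
      Compat x0 p.1 p.2).card = (A ∪ B ∪ C).card := by
    refine Finset.card_bij' (fun p _ => fun x => (p.1 x, p.2 x))
      (fun h _ => (fun x => (h x).1, fun x => (h x).2)) ?_ ?_ ?_ ?_
    · intro p hp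
      simp only [Finset.mem_filter, Finset.mem_univ, true_and] at hp
      simp only [hA', hB', hC', Finset.mem_union, Finset.mem_filter, Finset.mem_univ, true_and]
      have := (compat_iff x0 p.1 p.2).mp hp
      tauto
    · intro h hh
      simp only [hA', hB', hC', Finset.mem_union, Finset.mem_filter, Finset.mem_univ,
        true_and] at hh
      simp only [Finset.mem_filter, Finset.mem_univ, true_and]
      rw [compat_iff]
      simp only [Prod.mk.eta]
      tauto
    · intro p hp; rfl
    · intro h hh; rfl
  -- inclusion-exclusion
  have e1 := Finset.card_union_add_card_inter (A ∪ B) C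
  have e2 := Finset.card_union_add_card_inter A B
  have e3 : (A ∪ B) ∩ C = A ∩ C ∪ B ∩ C := Finset.union_inter_distrib_right A B C
  have e4 := Finset.card_union_add_card_inter (A ∩ C) (B ∩ C)
  have e5 : A ∩ C ∩ (B ∩ C) = A ∩ B ∩ C := by
    ext v; simp only [Finset.mem_inter]; tauto
  rw [e3] at e1
  rw [e5] at e4
  have c1 : ((A ∪ B ∪ C).card : ℝ) + ((A ∩ C ∪ B ∩ C).card : ℝ)
      = ((A ∪ B).card : ℝ) + (C.card : ℝ) := by exact_mod_cast congrArg (Nat.cast : ℕ → ℝ) e1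
  have c2 : ((A ∪ B).card : ℝ) + ((A ∩ B).card : ℝ)
      = (A.card : ℝ) + (B.card : ℝ) := by exact_mod_cast congrArg (Nat.cast : ℕ → ℝ) e2
  have c4 : ((A ∩ C ∪ B ∩ C).card : ℝ) + ((A ∩ B ∩ C).card : ℝ)
      = ((A ∩ C).card : ℝ) + ((B ∩ C).card : ℝ) := by
    exact_mod_cast congrArg (Nat.cast : ℕ → ℝ) e4
  have hNr : (((Finset.univ.filter fun p : (Fin (m+1) → Bool) × (Fin (m+1) → Bool) =>
      Compat x0 p.1 p.2).card : ℕ) : ℝ) = 12 * 3 ^ m + 4 - 12 * 2 ^ m := by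
    rw [hbij]
    rw [hcA, hcB, hcAB] at c2
    rw [hcC] at c1
    rw [hcAC, hcBC, hcABC] at c4
    push_cast at c1 c2 c4
    linarith
  rw [hNr]
  simp only [Nat.add_sub_cancel]
  have h2 : (2 : ℝ) ^ m ≠ 0 := by positivity
  have h4 : (4 : ℝ) ^ (m + 1) ≠ 0 := by positivity
  have h44 : (4 : ℝ) ^ m = 2 ^ m * 2 ^ m := by rw [← mul_pow]; norm_num
  rw [div_pow, div_pow, one_pow, pow_succ (3 : ℝ), pow_succ (4 : ℝ), h44]
  field_simp
  ring
end

section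
/- For an unrooted phylogenetic tree T with n leaves and at least k interior edges, the probability p_T that a uniformly random binary character on the leaf set is compatible with T satisfies p_T ≤ k·(1/2)^(n−3) + (1/2)^k. -/
open Finset SimpleGraph
open scoped Classical

/-- The set of vertices lying on a path between two elements of `S` (the minimal
subtree of the tree `G` spanning `S`). -/
def tspan {V : Type*} (G : SimpleGraph V) (S : Set V) : Set V :=
  {u | ∃ a ∈ S, ∃ b ∈ S, ∃ p : G.Walk a b, p.IsPath ∧ u ∈ p.support}

/-- A binary character `χ` on the leaves (labelled by `ℓ`) is compatible with the tree
`G` iff the minimal subtrees spanning the two state classes share at most one vertex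
(equivalently, some refinement of `G` displays `χ`). -/
def CompatWithTree {V : Type*} {n : ℕ} (G : SimpleGraph V) (ℓ : Fin n → V)
    (χ : Fin n → Bool) : Prop :=
  Set.Subsingleton
    (tspan G (ℓ '' {x | χ x = true}) ∩ tspan G (ℓ '' {x | χ x = false}))

namespace Stmt10Aux

open SimpleGraph Walk

variable {V : Type*} {G : SimpleGraph V}

/-- canonical path in a tree -/
noncomputable def tp (hG : G.IsTree) (u v : V) : G.Walk u v :=
  (hG.existsUnique_path u v).choose

lemma tp_isPath (hG : G.IsTree) (u v : V) : (tp hG u v).IsPath :=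
  (hG.existsUnique_path u v).choose_spec.1

lemma tp_eq (hG : G.IsTree) {u v : V} (p : G.Walk u v) (hp : p.IsPath) : p = tp hG u v :=
  (hG.existsUnique_path u v).choose_spec.2 p hp

lemma tp_support_subset (hG : G.IsTree) {u v : V} (w : G.Walk u v) :
    (tp hG u v).support ⊆ w.support := by
  rw [← tp_eq hG w.bypass w.bypass_isPath]
  exact w.support_bypass_subset

lemma tp_symm (hG : G.IsTree) {u v z : V} (h : z ∈ (tp hG u v).support) :
    z ∈ (tp hG v u).support := by
  rw [← tp_eq hG (tp hG u v).reverse (tp_isPath hG u v).reverse, Walk.support_reverse,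
    List.mem_reverse]
  exact h

lemma tp_trans (hG : G.IsTree) {x y u z : V} (h1 : z ∉ (tp hG x y).support)
    (h2 : z ∉ (tp hG y u).support) : z ∉ (tp hG x u).support := by
  intro h
  have := tp_support_subset hG ((tp hG x y).append (tp hG y u)) h
  rw [Walk.mem_support_append_iff] at this
  tauto

lemma exists_first {u t : V} (p : G.Walk u t) (S : Set V) (ht : t ∈ S) :
    ∃ (m : V) (q : G.Walk u m) (r : G.Walk m t), m ∈ S ∧ p = q.append r ∧
      ∀ z ∈ q.support, z ∈ S → z = m := by
  induction p with
  | nil =>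
    refine ⟨_, Walk.nil, Walk.nil, ht, rfl, ?_⟩
    intro z hz _
    simpa using hz
  | @cons a b c h p ih =>
    by_cases ha : a ∈ S
    · exact ⟨a, Walk.nil, Walk.cons h p, ha, rfl, by simp⟩
    · obtain ⟨m, q, r, hm, hpe, hmin⟩ := ih ht
      refine ⟨m, Walk.cons h q, r, hm, by rw [Walk.cons_append, hpe], ?_⟩
      intro z hz hzS
      rw [Walk.support_cons, List.mem_cons] at hz
      rcases hz with rfl | hz
      · exact absurd hzS ha
      · exact hmin z hz hzS

lemma IsPath.append' {u v w : V} {p : G.Walk u v} {q : G.Walk v w} (hp : p.IsPath)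
    (hq : q.IsPath) (hint : ∀ z ∈ p.support, z ∈ q.support → z = v) :
    (p.append q).IsPath := by
  rw [Walk.isPath_def, Walk.support_append]
  apply List.Nodup.append hp.support_nodup
  · have := hq.support_nodup
    rw [q.support_eq_cons] at this
    exact this.of_cons
  · intro z hz1 hz2
    have hzq : z ∈ q.support := List.tail_subset _ hz2
    have hzv : z = v := hint z hz1 hzq
    subst hzv
    have := hq.support_nodup
    rw [q.support_eq_cons, List.nodup_cons] at this
    exact this.1 hz2

lemma nbr_unique {x y v : V} [Fintype V] [DecidableRel G.Adj] (hdeg : G.degree v = 1)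
    (hx : G.Adj v x) (hy : G.Adj v y) : x = y :=
  Finset.card_le_one.mp hdeg.le _ ((mem_neighborFinset G v x).2 hx) _
    ((mem_neighborFinset G v y).2 hy)

lemma leaf_endpoint [Fintype V] [DecidableRel G.Adj] {a b z : V} {p : G.Walk a b}
    (hp : p.IsPath) (hz : z ∈ p.support) (hdeg : G.degree z = 1) : z = a ∨ z = b := by
  by_contra hcon
  push_neg at hcon
  obtain ⟨hza, hzb⟩ := hcon
  have hspec := p.take_spec hz
  set q := p.takeUntil z hz with hq
  set r := p.dropUntil z hz with hr
  -- q : a → z nonempty, r : z → b nonempty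
  obtain ⟨t1, h1, q1, hq1⟩ := Walk.exists_eq_cons_of_ne hza q.reverse
  obtain ⟨t2, h2, r1, hr1⟩ := Walk.exists_eq_cons_of_ne hzb r
  have ht12 : t1 = t2 := nbr_unique hdeg h1 h2
  subst ht12
  -- t1 appears in q.support and in r.support.tail; contradiction with p path
  have hp' : (q.append r).IsPath := by rw [hspec]; exact hp
  rw [Walk.isPath_def, Walk.support_append] at hp'
  have hmem1 : t1 ∈ q.support := by
    have : t1 ∈ q.reverse.support := by rw [hq1, Walk.support_cons]; simp
    rwa [Walk.support_reverse, List.mem_reverse] at this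
  have hmem2 : t1 ∈ r.support.tail := by
    rw [hr1, Walk.support_cons]
    simp
  exact (List.disjoint_of_nodup_append hp') hmem1 hmem2

lemma eq_of_length_zero {u v : V} (p : G.Walk u v) (h : p.length = 0) : u = v := by
  cases p with
  | nil => rfl
  | cons h p => simp [Walk.length_cons] at h

lemma eq_of_two_leaves [Fintype V] [DecidableRel G.Adj] (hG : G.IsTree) {v w : V}
    (hvw : G.Adj v w) (hv : G.degree v = 1) (hw : G.degree w = 1) (u : V) :
    u = v ∨ u = w := by
  have hp := tp_isPath hG v u
  set p := tp hG v u with hpdef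
  clear_value p
  cases p with
  | nil => exact Or.inl rfl
  | @cons _ t _ h1 p1 =>
    have ht : t = w := nbr_unique hv h1 hvw
    subst ht
    cases p1 with
    | nil => exact Or.inr rfl
    | @cons _ t2 _ h2 p2 =>
      have ht2 : t2 = v := nbr_unique hw h2 hvw.symm
      subst ht2
      exfalso
      rw [Walk.isPath_def] at hp
      simp only [Walk.support_cons, List.nodup_cons] at hp
      exact hp.1 (List.mem_cons.2 (Or.inr p2.start_mem_support))


/-! ### tspan lemmas -/

lemma mem_tspan (hG : G.IsTree) {S : Set V} {a b z : V} (ha : a ∈ S) (hb : b ∈ S)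
    (hz : z ∈ (tp hG a b).support) : z ∈ tspan G S :=
  ⟨a, ha, b, hb, tp hG a b, tp_isPath hG a b, hz⟩

lemma tspan_elim (hG : G.IsTree) {S : Set V} {z : V} (h : z ∈ tspan G S) :
    ∃ a ∈ S, ∃ b ∈ S, z ∈ (tp hG a b).support := by
  obtain ⟨a, ha, b, hb, p, hp, hz⟩ := h
  exact ⟨a, ha, b, hb, by rwa [tp_eq hG p hp] at hz⟩

lemma tp_mem_union (hG : G.IsTree) {u a b w z : V} (hw : w ∈ (tp hG a b).support)
    (hz : z ∈ (tp hG u w).support) :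
    z ∈ (tp hG u a).support ∨ z ∈ (tp hG a b).support := by
  have hsub := tp_support_subset hG ((tp hG u a).append ((tp hG a b).takeUntil w hw)) hz
  rw [Walk.mem_support_append_iff] at hsub
  rcases hsub with h | h
  · exact Or.inl h
  · exact Or.inr ((tp hG a b).support_takeUntil_subset hw h)

lemma tspan_convex (hG : G.IsTree) {S : Set V} {x y : V} (hx : x ∈ tspan G S)
    (hy : y ∈ tspan G S) : ∀ z ∈ (tp hG x y).support, z ∈ tspan G S := by
  obtain ⟨a1, ha1, a2, ha2, hx'⟩ := tspan_elim hG hx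
  obtain ⟨a3, ha3, a4, ha4, hy'⟩ := tspan_elim hG hy
  intro z hz
  rcases tp_mem_union hG hy' hz with h | h
  · rcases tp_mem_union hG hx' (tp_symm hG h) with h' | h'
    · exact mem_tspan hG ha3 ha1 h'
    · exact mem_tspan hG ha1 ha2 h'
  · exact mem_tspan hG ha3 ha4 h

/-! ### main compatibility lemmas -/

lemma case1 (hG : G.IsTree) {SA SB : Set V} (hsub : (SA ∩ SB).Subsingleton)
    (hconvA : ∀ x ∈ SA, ∀ y ∈ SA, ∀ z ∈ (tp hG x y).support, z ∈ SA)
    (hconvB : ∀ x ∈ SB, ∀ y ∈ SB, ∀ z ∈ (tp hG x y).support, z ∈ SB)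
    {v : V} (hvA : v ∈ SA) (hvB : v ∈ SB) {a b : V} (ha : a ∈ SA) (hb : b ∈ SB) :
    v ∈ (tp hG a b).support := by
  by_contra hvR
  obtain ⟨m, t, r, hmR, hsplit, hmin⟩ :=
    exists_first (tp hG v a) ((tp hG a b).support.toFinset : Set V)
      (by simpa using (tp hG a b).start_mem_support)
  simp only [List.coe_toFinset, Set.mem_setOf_eq] at hmR hmin
  have hpath_va : (t.append r).IsPath := by rw [← hsplit]; exact tp_isPath hG v a
  have ht : t.IsPath := hpath_va.of_append_left
  have htsub : t.support ⊆ (tp hG v a).support := by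
    rw [hsplit]
    intro z hz
    rw [Walk.mem_support_append_iff]
    exact Or.inl hz
  have hmA : m ∈ SA := hconvA v hvA a ha m (htsub t.end_mem_support)
  have hmv : m ≠ v := fun h => hvR (h ▸ hmR)
  have hdrop : ((tp hG a b).dropUntil m hmR).IsPath := (tp_isPath hG a b).dropUntil hmR
  have hW : (t.append ((tp hG a b).dropUntil m hmR)).IsPath := by
    apply IsPath.append' ht hdrop
    intro z hz1 hz2
    exact hmin z hz1 ((tp hG a b).support_dropUntil_subset hmR hz2)
  have hWeq := tp_eq hG _ hW
  have hmW : m ∈ (t.append ((tp hG a b).dropUntil m hmR)).support := by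
    rw [Walk.mem_support_append_iff]; exact Or.inl t.end_mem_support
  have hmB : m ∈ SB := hconvB v hvB b hb m (hWeq ▸ hmW)
  exact hmv (hsub ⟨hmA, hmB⟩ ⟨hvA, hvB⟩)

lemma bridge (hG : G.IsTree) {SA SB : Set V}
    (hconvA : ∀ x ∈ SA, ∀ y ∈ SA, ∀ z ∈ (tp hG x y).support, z ∈ SA)
    (hconvB : ∀ x ∈ SB, ∀ y ∈ SB, ∀ z ∈ (tp hG x y).support, z ∈ SB)
    (hdisj : ∀ z, z ∈ SA → z ∈ SB → False)
    {v w : V} {s : G.Walk v w} (hs : s.IsPath) (hvA : v ∈ SA) (hwB : w ∈ SB)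
    (hsA : ∀ z ∈ s.support, z ∈ SA → z = v)
    {a b : V} (ha : a ∈ SA) (hb : b ∈ SB) :
    v ∈ (tp hG a b).support := by
  by_contra hvR
  have h1 : v ∉ (tp hG w b).support := fun h => hdisj v hvA (hconvB w hwB b hb v h)
  -- v is the gate: v ∈ tp w a
  have h2 : v ∈ (tp hG w a).support := by
    obtain ⟨m, t, r, hmA, hsplit, hmin⟩ := exists_first (tp hG w a) SA ha
    have hpath_wa : (t.append r).IsPath := by rw [← hsplit]; exact tp_isPath hG w a
    have ht : t.IsPath := hpath_wa.of_append_left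
    have hW : (t.append (tp hG m v)).IsPath := by
      apply IsPath.append' ht (tp_isPath hG m v)
      intro z hz1 hz2
      exact hmin z hz1 (hconvA m hmA v hvA z hz2)
    have hWeq := tp_eq hG _ hW
    have hseq : s.reverse = tp hG w v := tp_eq hG _ hs.reverse
    have hmW : m ∈ (t.append (tp hG m v)).support := by
      rw [Walk.mem_support_append_iff]; exact Or.inl t.end_mem_support
    have hms : m ∈ s.support := by
      have : m ∈ (tp hG w v).support := hWeq ▸ hmW
      rw [← hseq, Walk.support_reverse, List.mem_reverse] at this
      exact this
    have hmv : m = v := hsA m hms hmA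
    subst hmv
    have : m ∈ t.support := t.end_mem_support
    rw [hsplit]
    rw [Walk.mem_support_append_iff]
    exact Or.inl this
  have h1' : v ∉ (tp hG b w).support := fun h => h1 (tp_symm hG h)
  have h3 : v ∉ (tp hG a w).support := tp_trans hG hvR h1'
  exact h3 (tp_symm hG h2)


lemma bridge2 (hG : G.IsTree) {SA SB : Set V}
    (hconvA : ∀ x ∈ SA, ∀ y ∈ SA, ∀ z ∈ (tp hG x y).support, z ∈ SA)
    (hconvB : ∀ x ∈ SB, ∀ y ∈ SB, ∀ z ∈ (tp hG x y).support, z ∈ SB)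
    {v w z : V} {s : G.Walk v w} (hs : s.IsPath) (hvA : v ∈ SA) (hwB : w ∈ SB)
    (hzs : z ∈ s.support) (hzA : z ∉ SA) (hzB : z ∉ SB)
    {a b : V} (ha : a ∈ SA) (hb : b ∈ SB) :
    z ∈ (tp hG a b).support := by
  by_contra h
  have h1 : z ∉ (tp hG v a).support := fun hh => hzA (hconvA v hvA a ha z hh)
  have h2 : z ∉ (tp hG b w).support := fun hh => hzB (hconvB b hb w hwB z hh)
  have h3 : z ∉ (tp hG v w).support := tp_trans hG (tp_trans hG h1 h) h2
  exact h3 (tp_eq hG s hs ▸ hzs)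

lemma span_leaf_mem [Fintype V] [DecidableRel G.Adj] {T : Set V} {z : V}
    (h : z ∈ tspan G T) (hdeg : G.degree z = 1) : z ∈ T := by
  obtain ⟨a, ha, b, hb, p, hp, hz⟩ := h
  rcases leaf_endpoint hp hz hdeg with rfl | rfl
  · exact ha
  · exact hb

lemma walk_second {v w : V} (s : G.Walk v w) (hvw : v ≠ w) :
    ∃ z, G.Adj v z ∧ z ∈ s.support ∧ z ≠ v ∧ (z = w → G.Adj v w) := by
  obtain ⟨z, h, p', rfl⟩ := Walk.exists_eq_cons_of_ne hvw s
  refine ⟨z, h, ?_, (G.ne_of_adj h).symm, fun hzw => hzw ▸ h⟩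
  rw [Walk.support_cons]
  exact List.mem_cons.2 (Or.inr p'.start_mem_support)

section Main

variable [Fintype V] [DecidableRel G.Adj] {n : ℕ} {ℓ : Fin n → V}

/-- branch-constancy predicate -/
def BC (hG : G.IsTree) (ℓ : Fin n → V) (v : V) (χ : Fin n → Bool) : Prop :=
  ∀ x y, χ x = true → χ y = false → v ∈ (tp hG (ℓ x) (ℓ y)).support

lemma exists_branch_vertex (hG : G.IsTree) (hinj : Function.Injective ℓ)
    (hleaf : ∀ v : V, G.degree v = 1 ↔ v ∈ Set.range ℓ)
    {χ : Fin n → Bool} (hcompat : CompatWithTree G ℓ χ)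
    {v0 : V} (hv0 : v0 ∉ Set.range ℓ) :
    ∃ v, v ∉ Set.range ℓ ∧ BC hG ℓ v χ := by
  classical
  set SA := tspan G (ℓ '' {x | χ x = true}) with hSA
  set SB := tspan G (ℓ '' {x | χ x = false}) with hSB
  have hconvA : ∀ x ∈ SA, ∀ y ∈ SA, ∀ z ∈ (tp hG x y).support, z ∈ SA :=
    fun x hx y hy => tspan_convex hG hx hy
  have hconvB : ∀ x ∈ SB, ∀ y ∈ SB, ∀ z ∈ (tp hG x y).support, z ∈ SB :=
    fun x hx y hy => tspan_convex hG hx hy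
  have hmemA : ∀ x, χ x = true → ℓ x ∈ SA := fun x hx =>
    mem_tspan hG ⟨x, hx, rfl⟩ ⟨x, hx, rfl⟩ (tp hG (ℓ x) (ℓ x)).start_mem_support
  have hmemB : ∀ y, χ y = false → ℓ y ∈ SB := fun y hy =>
    mem_tspan hG ⟨y, hy, rfl⟩ ⟨y, hy, rfl⟩ (tp hG (ℓ y) (ℓ y)).start_mem_support
  -- a vertex in both spans is interior
  have hint_both : ∀ z, z ∈ SA → z ∈ SB → z ∉ Set.range ℓ := by
    rintro z hzA hzB ⟨x0, rfl⟩
    have hdeg : G.degree (ℓ x0) = 1 := (hleaf _).2 ⟨x0, rfl⟩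
    obtain ⟨xa, hxa, hℓa⟩ := span_leaf_mem hzA hdeg
    obtain ⟨xb, hxb, hℓb⟩ := span_leaf_mem hzB hdeg
    have h1 : xa = x0 := hinj hℓa
    have h2 : xb = x0 := hinj hℓb
    subst h1; subst h2
    rw [Set.mem_setOf_eq] at hxa hxb
    rw [hxa] at hxb
    exact Bool.noConfusion hxb
  by_cases hex : ∃ z, z ∈ SA ∧ z ∈ SB
  · obtain ⟨z, hzA, hzB⟩ := hex
    exact ⟨z, hint_both z hzA hzB,
      fun x y hx hy => case1 hG hcompat hconvA hconvB hzA hzB (hmemA x hx) (hmemB y hy)⟩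
  push_neg at hex
  have hdisj : ∀ z, z ∈ SA → z ∈ SB → False := hex
  by_cases hT : ∃ x, χ x = true
  swap
  · exact ⟨v0, hv0, fun x y hx _ => absurd ⟨x, hx⟩ hT⟩
  by_cases hF : ∃ y, χ y = false
  swap
  · exact ⟨v0, hv0, fun x y _ hy => absurd ⟨y, hy⟩ hF⟩
  obtain ⟨a0, ha0⟩ := hT
  obtain ⟨b0, hb0⟩ := hF
  have haA : ℓ a0 ∈ SA := hmemA a0 ha0
  have hbB : ℓ b0 ∈ SB := hmemB b0 hb0
  -- first vertex of the path from ℓ b0 to ℓ a0 lying in SA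
  obtain ⟨v, q, q2, hvA, hQsplit, hqminA⟩ := exists_first (tp hG (ℓ b0) (ℓ a0)) SA haA
  have hqpath : q.IsPath := by
    have : (q.append q2).IsPath := by rw [← hQsplit]; exact tp_isPath hG _ _
    exact this.of_append_left
  -- last vertex of q lying in SB (first from the v side)
  obtain ⟨w, s, s2, hwB, hRsplit, hsminB⟩ := exists_first q.reverse SB hbB
  have hspath : s.IsPath := by
    have : (s.append s2).IsPath := by rw [← hRsplit]; exact hqpath.reverse
    exact this.of_append_left
  have hssub : s.support ⊆ q.support := by
    intro z hz
    have : z ∈ q.reverse.support := by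
      rw [hRsplit, Walk.mem_support_append_iff]; exact Or.inl hz
    rwa [Walk.support_reverse, List.mem_reverse] at this
  have hsA : ∀ z ∈ s.support, z ∈ SA → z = v := fun z hz hzA => hqminA z (hssub hz) hzA
  have hsB : ∀ z ∈ s.support, z ∈ SB → z = w := hsminB
  have hvw : v ≠ w := fun h => hdisj v hvA (h ▸ hwB)
  by_cases hvL : v ∉ Set.range ℓ
  · exact ⟨v, hvL, fun x y hx hy =>
      bridge hG hconvA hconvB hdisj hspath hvA hwB hsA (hmemA x hx) (hmemB y hy)⟩
  by_cases hwL : w ∉ Set.range ℓ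
  · refine ⟨w, hwL, fun x y hx hy => ?_⟩
    have hsB' : ∀ z ∈ s.reverse.support, z ∈ SB → z = w := by
      intro z hz hzB
      rw [Walk.support_reverse, List.mem_reverse] at hz
      exact hsB z hz hzB
    have := bridge hG hconvB hconvA (fun z h1 h2 => hdisj z h2 h1) hspath.reverse hwB hvA
      hsB' (hmemB y hy) (hmemA x hx)
    exact tp_symm hG this
  push_neg at hvL hwL
  have hdegv : G.degree v = 1 := (hleaf v).2 hvL
  have hdegw : G.degree w = 1 := (hleaf w).2 hwL
  obtain ⟨z, hadj, hzs, hzv, hzw_imp⟩ := walk_second s hvw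
  by_cases hzw : z = w
  · -- v and w are adjacent leaves: the whole graph is {v, w}, contradiction with v0
    exfalso
    have hvwadj := hzw_imp hzw
    rcases eq_of_two_leaves hG hvwadj hdegv hdegw v0 with rfl | rfl
    · exact hv0 hvL
    · exact hv0 hwL
  · have hzA : z ∉ SA := fun h => hzv (hsA z hzs h)
    have hzB : z ∉ SB := fun h => hzw (hsB z hzs h)
    have hzI : z ∉ Set.range ℓ := by
      rintro ⟨x0, rfl⟩
      have hdeg : G.degree (ℓ x0) = 1 := (hleaf _).2 ⟨x0, rfl⟩
      have hz' : ℓ x0 ∈ (tp hG v w).support := tp_eq hG s hspath ▸ hzs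
      rcases leaf_endpoint (tp_isPath hG v w) hz' hdeg with rfl | rfl
      · exact hzv rfl
      · exact hzw rfl
    exact ⟨z, hzI, fun x y hx hy =>
      bridge2 hG hconvA hconvB hspath hvA hwB hzs hzA hzB (hmemA x hx) (hmemB y hy)⟩

end Main


section Counting

variable [Fintype V] [DecidableEq V] [DecidableRel G.Adj] {n : ℕ} {ℓ : Fin n → V}

lemma count_le (hG : G.IsTree) (ℓ : Fin n → V) (v : V) (hvI : v ∉ Set.range ℓ) :
    (Finset.univ.filter fun χ : Fin n → Bool => BC hG ℓ v χ).card ≤ 2 ^ G.degree v := by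
  classical
  have hvx : ∀ x : Fin n, v ≠ ℓ x := fun x h => hvI ⟨x, h.symm⟩
  have hg : ∀ x : Fin n, ∃ u, G.Adj v u ∧ ∃ q : G.Walk u (ℓ x), v ∉ q.support := by
    intro x
    obtain ⟨u, huv, q, hq⟩ := Walk.exists_eq_cons_of_ne (hvx x) (tp hG v (ℓ x))
    refine ⟨u, huv, q, ?_⟩
    have hp := tp_isPath hG v (ℓ x)
    rw [hq, Walk.isPath_def, Walk.support_cons, List.nodup_cons] at hp
    exact hp.1
  choose g hgadj hgq using hg
  -- common gate implies same branch
  have hsame : ∀ x y : Fin n, g x = g y → v ∉ (tp hG (ℓ x) (ℓ y)).support := by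
    intro x y hxy h
    obtain ⟨qx, hqx⟩ := hgq x
    obtain ⟨qy, hqy⟩ := hgq y
    have := tp_support_subset hG (qx.reverse.append ((qy.copy hxy.symm rfl))) h
    rw [Walk.mem_support_append_iff, Walk.support_reverse, List.mem_reverse,
      Walk.support_copy] at this
    tauto
  have hBCval : ∀ χ : Fin n → Bool, BC hG ℓ v χ → ∀ x y : Fin n, g x = g y → χ x = χ y := by
    intro χ hBC x y hxy
    cases hx : χ x <;> cases hy : χ y
    · rfl
    · exact absurd (tp_symm hG (hBC y x hy hx)) (hsame x y hxy)
    · exact absurd (hBC x y hx hy) (hsame x y hxy)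
    · rfl
  set Φ : (Fin n → Bool) → (↥(G.neighborFinset v) → Bool) := fun χ u =>
    if h : ∃ x : Fin n, g x = ↑u then χ h.choose else false with hΦ
  have hkey : ∀ χ : Fin n → Bool, BC hG ℓ v χ → ∀ x : Fin n,
      Φ χ ⟨g x, (G.mem_neighborFinset v (g x)).2 (hgadj x)⟩ = χ x := by
    intro χ hBC x
    have hx : ∃ x' : Fin n, g x' = (⟨g x, (G.mem_neighborFinset v (g x)).2 (hgadj x)⟩ :
        ↥(G.neighborFinset v)) := ⟨x, rfl⟩
    rw [hΦ]
    simp only [dif_pos hx]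
    exact hBCval χ hBC _ x hx.choose_spec
  calc (Finset.univ.filter fun χ : Fin n → Bool => BC hG ℓ v χ).card
      ≤ (Finset.univ : Finset (↥(G.neighborFinset v) → Bool)).card := by
        apply Finset.card_le_card_of_injOn Φ (fun _ _ => Finset.mem_univ _)
        intro χ hχ χ' hχ' heq
        have hBC : BC hG ℓ v χ := (Finset.mem_filter.1 hχ).2
        have hBC' : BC hG ℓ v χ' := (Finset.mem_filter.1 hχ').2
        funext x
        rw [← hkey χ hBC x, ← hkey χ' hBC' x, heq]
    _ = 2 ^ G.degree v := by
        rw [Finset.card_univ, Fintype.card_fun, Fintype.card_bool, Fintype.card_coe]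
        rfl

end Counting

section Arith

lemma add_le_mul_succ {x y : ℕ} (hx : 1 ≤ x) (hy : 1 ≤ y) : x + y ≤ x * y + 1 := by
  obtain ⟨a, rfl⟩ := Nat.exists_eq_add_of_le hx
  obtain ⟨b, rfl⟩ := Nat.exists_eq_add_of_le hy
  nlinarith

lemma sum_pow_le {α : Type*} (s : Finset α) (e : α → ℕ) (hne : s.Nonempty) :
    ∑ i ∈ s, 2 ^ e i ≤ (s.card - 1) + 2 ^ (∑ i ∈ s, e i) := by
  classical
  induction hne using Finset.Nonempty.cons_induction with
  | singleton a => simp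
  | cons a s ha hs ih =>
    rw [Finset.sum_cons, Finset.sum_cons, Finset.card_cons]
    have h1 : (1 : ℕ) ≤ 2 ^ e a := Nat.one_le_two_pow
    have h2 : (1 : ℕ) ≤ 2 ^ (∑ i ∈ s, e i) := Nat.one_le_two_pow
    have hkey := add_le_mul_succ h1 h2
    rw [← pow_add] at hkey
    have hc : 1 ≤ s.card := Finset.card_pos.2 hs
    omega

lemma mono_bound (M k : ℕ) : ∀ J, k ≤ J → J ≤ M → J + 2 ^ (M - J) ≤ k + 2 ^ (M - k) := by
  intro J
  induction J with
  | zero => intro h _; interval_cases k; exact le_rfl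
  | succ J ih =>
    intro hkJ hJM
    rcases Nat.eq_or_lt_of_le hkJ with rfl | hlt
    · exact le_rfl
    · have hkJ' : k ≤ J := Nat.lt_succ_iff.1 hlt
      have hJM' : J ≤ M := le_trans (Nat.le_succ J) hJM
      refine le_trans ?_ (ih hkJ' hJM')
      have hx : M - J = (M - (J + 1)) + 1 := by omega
      rw [hx, pow_succ]
      have := Nat.one_le_two_pow (n := M - (J + 1))
      omega

end Arith


section Edges

variable [Fintype V] [DecidableEq V] [DecidableRel G.Adj]

lemma adj_tp (hG : G.IsTree) {x c : V} (h : G.Adj x c) :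
    tp hG x c = Walk.cons h Walk.nil := by
  refine (tp_eq hG _ ?_).symm
  rw [Walk.isPath_def, Walk.support_cons, Walk.support_nil]
  simp [G.ne_of_adj h]

lemma concat_path (hG : G.IsTree) {u a c : V} {p : G.Walk u a} (hp : p.IsPath)
    (h : G.Adj a c) (hc : c ∉ p.support) : (p.append (Walk.cons h Walk.nil)).IsPath := by
  apply IsPath.append' hp
  · rw [Walk.isPath_def, Walk.support_cons, Walk.support_nil]
    simp [G.ne_of_adj h]
  · intro z hz1 hz2
    rw [Walk.support_cons, Walk.support_nil, List.mem_cons, List.mem_singleton] at hz2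
    rcases hz2 with rfl | rfl
    · rfl
    · exact absurd hz1 hc

/-- every edge has an endpoint `c` such that the other endpoint lies on the
path from the root `r` to `c` -/
lemma exists_good (hG : G.IsTree) (r : V) {e : Sym2 V} (he : e ∈ G.edgeSet) :
    ∃ c a, G.Adj a c ∧ e = s(a, c) ∧ a ∈ (tp hG r c).support := by
  induction e with
  | _ a b =>
    have hab : G.Adj a b := he
    by_cases hmem : a ∈ (tp hG r b).support
    · exact ⟨b, a, hab, rfl, hmem⟩
    · have hpath := concat_path hG (tp_isPath hG r b) hab.symm hmem
      have heq := tp_eq hG _ hpath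
      refine ⟨a, b, hab.symm, Sym2.eq_swap, ?_⟩
      rw [← heq, Walk.mem_support_append_iff]
      exact Or.inl (tp hG r b).end_mem_support

lemma good_unique (hG : G.IsTree) (r : V) {c a b : V} (ha : G.Adj a c) (hb : G.Adj b c)
    (hamem : a ∈ (tp hG r c).support) (hbmem : b ∈ (tp hG r c).support) : a = b := by
  classical
  set p := tp hG r c with hpdef
  have hppath : p.IsPath := tp_isPath hG r c
  -- p = (takeUntil a) ++ single edge, similarly for b
  have key : ∀ {x : V} (hx : G.Adj x c) (hxm : x ∈ p.support),
      p.support = (p.takeUntil x hxm).support ++ [c] := by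
    intro x hx hxm
    have hdrop : (p.dropUntil x hxm).IsPath := hppath.dropUntil hxm
    have : p.dropUntil x hxm = Walk.cons hx Walk.nil := by
      rw [tp_eq hG _ hdrop, adj_tp hG hx]
    conv_lhs => rw [← p.take_spec hxm]
    rw [Walk.support_append, this]
    simp
  have hA := key ha hamem
  have hB := key hb hbmem
  have hsupp_eq : (p.takeUntil a hamem).support = (p.takeUntil b hbmem).support := by
    have := hA.symm.trans hB
    exact (List.append_inj' this rfl).1
  -- c is not in the takeUntil part
  have hcnot : c ∉ (p.takeUntil a hamem).support := by
    have hnodup : p.support.Nodup := hppath.support_nodup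
    rw [hA] at hnodup
    intro hc
    exact (List.disjoint_of_nodup_append hnodup) hc (List.mem_singleton.2 rfl)
  -- b lies on the path r → a before a
  have hbta : b ∈ (p.takeUntil a hamem).support := by
    rw [hsupp_eq]; exact (p.takeUntil b hbmem).end_mem_support
  have hta_path : (p.takeUntil a hamem).IsPath := hppath.takeUntil hamem
  -- the path from b to a, then the edge a-c, is a path from b to c
  have hdba : ((p.takeUntil a hamem).dropUntil b hbta).IsPath := hta_path.dropUntil hbta
  have hcnot' : c ∉ ((p.takeUntil a hamem).dropUntil b hbta).support :=
    fun hc => hcnot ((p.takeUntil a hamem).support_dropUntil_subset hbta hc)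
  have hW := concat_path hG hdba ha hcnot'
  have hWeq : ((p.takeUntil a hamem).dropUntil b hbta).append (Walk.cons ha Walk.nil)
      = Walk.cons hb Walk.nil := by
    rw [tp_eq hG _ hW, adj_tp hG hb]
  have hlen := congrArg Walk.length hWeq
  simp only [Walk.length_append, Walk.length_cons, Walk.length_nil] at hlen
  have : ((p.takeUntil a hamem).dropUntil b hbta).length = 0 := by omega
  exact (eq_of_length_zero _ this).symm

lemma edges_card_bound (hG : G.IsTree) {n : ℕ} {ℓ : Fin n → V}
    (hleaf : ∀ v : V, G.degree v = 1 ↔ v ∈ Set.range ℓ)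
    {r : V} (hr : r ∉ Set.range ℓ) :
    (G.edgeFinset.filter fun e => ∀ v ∈ e, G.degree v ≠ 1).card + 1
      ≤ (Finset.univ.filter fun v : V => v ∉ Set.range ℓ).card := by
  classical
  set Int := Finset.univ.filter fun v : V => v ∉ Set.range ℓ with hInt
  have hrI : r ∈ Int := Finset.mem_filter.2 ⟨Finset.mem_univ r, hr⟩
  set f : Sym2 V → V := fun e => if h : ∃ c a, G.Adj a c ∧ e = s(a, c) ∧
    a ∈ (tp hG r c).support then h.choose else r with hf
  have hgood : ∀ e ∈ G.edgeFinset.filter (fun e => ∀ v ∈ e, G.degree v ≠ 1),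
      ∃ a, G.Adj a (f e) ∧ e = s(a, f e) ∧ a ∈ (tp hG r (f e)).support := by
    intro e he
    have he' : e ∈ G.edgeSet := (G.mem_edgeFinset).1 (Finset.mem_filter.1 he).1
    have hex := exists_good hG r he'
    have hfe : f e = hex.choose := by rw [hf]; exact dif_pos hex
    rw [hfe]
    exact hex.choose_spec
  have hmaps : ∀ e ∈ G.edgeFinset.filter (fun e => ∀ v ∈ e, G.degree v ≠ 1),
      f e ∈ Int.erase r := by
    intro e he
    obtain ⟨a, hadj, heq, hmem⟩ := hgood e he
    have hfe_ne : f e ≠ r := by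
      intro hfr
      rw [hfr] at hmem
      have : tp hG r r = Walk.nil := (tp_eq hG Walk.nil (Walk.IsPath.nil)).symm
      rw [this, Walk.support_nil, List.mem_singleton] at hmem
      rw [hfr, hmem] at hadj
      exact G.irrefl hadj
    have hfe_mem : f e ∈ e := by
      have := Sym2.mem_mk_right a (f e)
      rwa [← heq] at this
    have hdeg : G.degree (f e) ≠ 1 := (Finset.mem_filter.1 he).2 (f e) hfe_mem
    have : f e ∉ Set.range ℓ := fun h => hdeg ((hleaf (f e)).2 h)
    exact Finset.mem_erase.2 ⟨hfe_ne, Finset.mem_filter.2 ⟨Finset.mem_univ _, this⟩⟩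
  have hinjOn : ∀ e1 ∈ G.edgeFinset.filter (fun e => ∀ v ∈ e, G.degree v ≠ 1),
      ∀ e2 ∈ G.edgeFinset.filter (fun e => ∀ v ∈ e, G.degree v ≠ 1), f e1 = f e2 → e1 = e2 := by
    intro e1 he1 e2 he2 hfeq
    obtain ⟨a, hadja, heqa, hmema⟩ := hgood e1 he1
    obtain ⟨b, hadjb, heqb, hmemb⟩ := hgood e2 he2
    rw [hfeq] at hadja heqa hmema
    have hab : a = b := good_unique hG r hadja hadjb hmema hmemb
    rw [heqa, hab]
    exact heqb.symm
  have hcard := Finset.card_le_card_of_injOn f hmaps hinjOn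
  have herase : (Int.erase r).card = Int.card - 1 := Finset.card_erase_of_mem hrI
  have hpos : 1 ≤ Int.card := Finset.card_pos.2 ⟨r, hrI⟩
  omega

end Edges


end Stmt10Aux

open Stmt10Aux

/-- For an unrooted phylogenetic tree G with n leaves and at least k interior edges,
the probability that a uniformly random binary character is compatible with G is at
most k(1/2)^(n-3) + (1/2)^k. -/
theorem stmt10 {V : Type*} [Fintype V] [DecidableEq V]
    (G : SimpleGraph V) [DecidableRel G.Adj] (hG : G.IsTree)
    {n : ℕ} (ℓ : Fin n → V) (hinj : Function.Injective ℓ)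
    (hleaf : ∀ v : V, G.degree v = 1 ↔ v ∈ Set.range ℓ)
    (hint : ∀ v : V, v ∉ Set.range ℓ → 3 ≤ G.degree v)
    (k : ℕ)
    (hk : k ≤ (G.edgeFinset.filter fun e => ∀ v ∈ e, G.degree v ≠ 1).card) :
    ((Finset.univ.filter fun χ : Fin n → Bool => CompatWithTree G ℓ χ).card : ℝ)
          / 2 ^ n
      ≤ (k : ℝ) * ((1 : ℝ) / 2) ^ (n - 3) + ((1 : ℝ) / 2) ^ k := by
  classical
  have hcount_all : (Finset.univ.filter fun χ : Fin n → Bool => CompatWithTree G ℓ χ).card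
      ≤ 2 ^ n := by
    calc (Finset.univ.filter fun χ : Fin n → Bool => CompatWithTree G ℓ χ).card
        ≤ (Finset.univ : Finset (Fin n → Bool)).card := Finset.card_le_card (Finset.filter_subset _ _)
      _ = 2 ^ n := by rw [Finset.card_univ, Fintype.card_fun, Fintype.card_bool, Fintype.card_fin]
  have hpow_pos : (0 : ℝ) < 2 ^ n := by positivity
  by_cases htriv : k = 0 ∨ n ≤ 3
  · -- trivial case : RHS ≥ 1 ≥ LHS
    have hLHS : ((Finset.univ.filter fun χ : Fin n → Bool => CompatWithTree G ℓ χ).card : ℝ)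
        / 2 ^ n ≤ 1 := by
      rw [div_le_one hpow_pos]
      exact_mod_cast hcount_all
    refine le_trans hLHS ?_
    rcases htriv with rfl | hn3
    · simp
    · have h1 : (n : ℕ) - 3 = 0 := by omega
      rw [h1, pow_zero, mul_one]
      have h2 : (0:ℝ) < ((1:ℝ)/2) ^ k := by positivity
      rcases Nat.eq_zero_or_pos k with rfl | hk1
      · simp
      · have : (1:ℝ) ≤ (k:ℝ) := by exact_mod_cast hk1
        linarith
  push_neg at htriv
  obtain ⟨hk0, hn4'⟩ := htriv
  have hn4 : 4 ≤ n := by omega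
  have hk1 : 1 ≤ k := Nat.one_le_iff_ne_zero.2 hk0
  -- an interior vertex exists
  set Eint := G.edgeFinset.filter fun e => ∀ v ∈ e, G.degree v ≠ 1 with hEint
  have hK1 : 1 ≤ Eint.card := le_trans hk1 hk
  obtain ⟨e0, he0⟩ := Finset.card_pos.1 hK1
  have he0' := Finset.mem_filter.1 he0
  obtain ⟨r, hr0⟩ : ∃ v, v ∈ e0 := Sym2.ind (fun a b => ⟨a, Sym2.mem_mk_left a b⟩) e0
  have hrI : r ∉ Set.range ℓ := fun h => (he0'.2 r hr0) ((hleaf r).2 h)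
  set Int := Finset.univ.filter fun v : V => v ∉ Set.range ℓ with hIntDef
  set I := Int.card with hIdef
  have hrInt : r ∈ Int := Finset.mem_filter.2 ⟨Finset.mem_univ r, hrI⟩
  have hI1 : 1 ≤ I := Finset.card_pos.2 ⟨r, hrInt⟩
  -- union bound
  have hunion : (Finset.univ.filter fun χ : Fin n → Bool => CompatWithTree G ℓ χ).card
      ≤ ∑ v ∈ Int, 2 ^ G.degree v := by
    calc (Finset.univ.filter fun χ : Fin n → Bool => CompatWithTree G ℓ χ).card
        ≤ (Int.biUnion fun v => Finset.univ.filter fun χ : Fin n → Bool => BC hG ℓ v χ).card := by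
          apply Finset.card_le_card
          intro χ hχ
          have hcompat : CompatWithTree G ℓ χ := (Finset.mem_filter.1 hχ).2
          obtain ⟨v, hvI, hBC⟩ := exists_branch_vertex hG hinj hleaf hcompat hrI
          exact Finset.mem_biUnion.2 ⟨v, Finset.mem_filter.2 ⟨Finset.mem_univ v, hvI⟩,
            Finset.mem_filter.2 ⟨Finset.mem_univ χ, hBC⟩⟩
      _ ≤ ∑ v ∈ Int, (Finset.univ.filter fun χ : Fin n → Bool => BC hG ℓ v χ).card :=
          Finset.card_biUnion_le
      _ ≤ ∑ v ∈ Int, 2 ^ G.degree v := by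
          apply Finset.sum_le_sum
          intro v hv
          exact count_le hG ℓ v (Finset.mem_filter.1 hv).2
  -- structural equations
  have hVcard : Fintype.card V = n + I := by
    have hsplit := Finset.card_filter_add_card_filter_not
      (s := (Finset.univ : Finset V)) (p := fun v => v ∈ Set.range ℓ)
    have himg : Finset.univ.filter (fun v : V => v ∈ Set.range ℓ) = Finset.univ.image ℓ := by
      ext v
      simp [Set.mem_range, eq_comm]
    have hn : (Finset.univ.filter (fun v : V => v ∈ Set.range ℓ)).card = n := by
      rw [himg, Finset.card_image_of_injective _ hinj, Finset.card_univ, Fintype.card_fin]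
    have h2 : (Finset.univ.filter (fun v : V => ¬ v ∈ Set.range ℓ)).card = I := rfl
    rw [Finset.card_univ] at hsplit
    omega
  have hedge : G.edgeFinset.card + 1 = Fintype.card V := hG.card_edgeFinset
  have hhand : ∑ v, G.degree v = 2 * G.edgeFinset.card := G.sum_degrees_eq_twice_card_edges
  have hsplitsum : ∑ v, G.degree v = n + ∑ v ∈ Int, G.degree v := by
    have h := Finset.sum_filter_add_sum_filter_not (Finset.univ : Finset V)
      (fun v => v ∈ Set.range ℓ) (fun v => G.degree v)
    have h1 : ∑ v ∈ Finset.univ.filter (fun v : V => v ∈ Set.range ℓ), G.degree v = n := by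
      rw [Finset.sum_congr rfl (fun v hv => (hleaf v).2 (Finset.mem_filter.1 hv).2)]
      rw [Finset.sum_const, smul_eq_mul, mul_one]
      have himg : Finset.univ.filter (fun v : V => v ∈ Set.range ℓ) = Finset.univ.image ℓ := by
        ext v
        simp [Set.mem_range, eq_comm]
      rw [himg, Finset.card_image_of_injective _ hinj, Finset.card_univ, Fintype.card_fin]
    rw [← h, h1]
  have hdeg3 : ∀ v ∈ Int, 3 ≤ G.degree v := fun v hv => hint v (Finset.mem_filter.1 hv).2
  set S := ∑ v ∈ Int, G.degree v with hSdef
  have hSsum : n + S = 2 * G.edgeFinset.card := by rw [← hsplitsum, hhand]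
  have hsum_shift : S = (∑ v ∈ Int, (G.degree v - 3)) + 3 * I := by
    have h : S = ∑ v ∈ Int, ((G.degree v - 3) + 3) :=
      Finset.sum_congr rfl (fun v hv => by have := hdeg3 v hv; omega)
    rw [h, Finset.sum_add_distrib, Finset.sum_const, smul_eq_mul, hIdef]
    ring
  set Esum := ∑ v ∈ Int, (G.degree v - 3) with hEsumDef
  have hEq : Esum + I + 2 = n := by omega
  -- power sum bounds
  have hpow : ∑ v ∈ Int, 2 ^ G.degree v = 8 * ∑ v ∈ Int, 2 ^ (G.degree v - 3) := by
    rw [Finset.mul_sum]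
    refine Finset.sum_congr rfl (fun v hv => ?_)
    have h3 := hdeg3 v hv
    calc 2 ^ G.degree v = 2 ^ ((G.degree v - 3) + 3) := by rw [Nat.sub_add_cancel h3]
      _ = 8 * 2 ^ (G.degree v - 3) := by rw [pow_add]; ring
  have hconv : ∑ v ∈ Int, 2 ^ (G.degree v - 3) ≤ (I - 1) + 2 ^ Esum :=
    sum_pow_le Int _ ⟨r, hrInt⟩
  have hKI : Eint.card + 1 ≤ I := edges_card_bound hG hleaf hrI
  have hkI : k + 1 ≤ I := by omega
  have hExp : Esum = (n - 3) - (I - 1) := by omega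
  have hmono := mono_bound (n - 3) k (I - 1) (by omega) (by omega)
  have hcount : (Finset.univ.filter fun χ : Fin n → Bool => CompatWithTree G ℓ χ).card
      ≤ 8 * k + 8 * 2 ^ ((n - 3) - k) := by
    calc (Finset.univ.filter fun χ : Fin n → Bool => CompatWithTree G ℓ χ).card
        ≤ ∑ v ∈ Int, 2 ^ G.degree v := hunion
      _ = 8 * ∑ v ∈ Int, 2 ^ (G.degree v - 3) := hpow
      _ ≤ 8 * ((I - 1) + 2 ^ ((n - 3) - (I - 1))) := by
          rw [← hExp]
          exact Nat.mul_le_mul_left 8 hconv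
      _ ≤ 8 * (k + 2 ^ ((n - 3) - k)) := Nat.mul_le_mul_left 8 hmono
      _ = 8 * k + 8 * 2 ^ ((n - 3) - k) := by ring
  -- pass to the reals
  have hk3n : k + 3 ≤ n := by omega
  obtain ⟨m, hm⟩ : ∃ m, (n - 3) - k = m := ⟨_, rfl⟩
  have hnm : n = k + 3 + m := by omega
  rw [hm] at hcount
  rw [div_le_iff₀ hpow_pos]
  have hRHS : ((k : ℝ) * ((1 : ℝ) / 2) ^ (n - 3) + ((1 : ℝ) / 2) ^ k) * 2 ^ n
      = 8 * k + 8 * 2 ^ m := by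
    have hn3 : n - 3 = k + m := by omega
    have h1 : ((1:ℝ)/2) = (2:ℝ)⁻¹ := by norm_num
    rw [h1, inv_pow, inv_pow, hn3, hnm, show k + 3 + m = (k + m) + 3 from by omega,
      pow_add ((2:ℝ)) (k+m) 3, pow_add ((2:ℝ)) k m]
    have h2k : (2:ℝ) ^ k ≠ 0 := by positivity
    have h2m : (2:ℝ) ^ m ≠ 0 := by positivity
    field_simp
    ring
  rw [hRHS]
  calc ((Finset.univ.filter fun χ : Fin n → Bool => CompatWithTree G ℓ χ).card : ℝ)
      ≤ ((8 * k + 8 * 2 ^ m : ℕ) : ℝ) := by exact_mod_cast hcount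
    _ = 8 * k + 8 * 2 ^ m := by push_cast; ring
end
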